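/- arXiv:2508.12052 — 4 statements merged into one kernel-verified Lean document; each statement's English description precedes it below -/
import Mathlib

section
/- Fix κ₀, κ₁, θ, κ∞ ∈ ℂ and set κ = ((κ₀+κ₁+θ−1)² − κ∞²)/4. Let U ⊆ ℂ be open and let q, p : U → ℂ be differentiable functions satisfying the Okamoto PVI Hamiltonian system on U, such that for all t ∈ U one has t(t−1) ≠ 0 and q(t) ∉ {0, 1, t}. Then q is twice differentiable on U and satisfies the Painlevé VI equation with parameters α = κ∞²/2, β = −κ₀²/2, γ = κ₁²/2, δ = (1−θ²)/2. -/
/-- Right-hand side of the `q`-equation of the Okamoto PVI Hamiltonian system. -/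
noncomputable def OkRq (κ₀ κ₁ θ κ : ℂ) (t q p : ℂ) : ℂ :=
  (1 / (t * (t - 1)))
    * ((q - 1) * (q - t) * (2 * q * p - κ₀) - κ₁ * q * (q - t)
        - (θ - 1) * q * (q - 1))

/-- Right-hand side of the `p`-equation of the Okamoto PVI Hamiltonian system. -/
noncomputable def OkRp (κ₀ κ₁ θ κ : ℂ) (t q p : ℂ) : ℂ :=
  -(1 / (t * (t - 1)))
    * (((3 * q ^ 2 - 2 * (t + 1) * q + t) * p - (κ₀ + κ₁) * (2 * q - t)
        - (θ - 1) * (2 * q - 1) + κ₀) * p + κ)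

/-- Right-hand side of the Painlevé VI equation with parameters α, β, γ, δ,
evaluated at time `t`, position `w` and velocity `w'`. -/
noncomputable def PVIrhs (α β γ δ : ℂ) (t w w' : ℂ) : ℂ :=
  (1 / 2) * (1 / w + 1 / (w - 1) + 1 / (w - t)) * w' ^ 2
    - (1 / t + 1 / (t - 1) + 1 / (w - t)) * w'
    + (w * (w - 1) * (w - t) / (t ^ 2 * (t - 1) ^ 2))
        * (α + β * t / w ^ 2 + γ * (t - 1) / (w - 1) ^ 2
            + δ * t * (t - 1) / (w - t) ^ 2)

set_option maxHeartbeats 4000000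

/-- Auxiliary: `PVIrhs` as a single fraction. -/
lemma PVIrhs_eq_aux (κ₀ κ₁ θ κinf t x v : ℂ) (ht0 : t ≠ 0) (ht1 : t - 1 ≠ 0)
    (hx : x ≠ 0) (hx1 : x - 1 ≠ 0) (hxt : x - t ≠ 0) :
    PVIrhs (κinf ^ 2 / 2) (-(κ₀ ^ 2) / 2) (κ₁ ^ 2 / 2) ((1 - θ ^ 2) / 2) t x v
    = (t ^ 2 * (t - 1) ^ 2 * x * (x - 1) * (x - t)
          * ((x - 1) * (x - t) + x * (x - t) + x * (x - 1)) * v ^ 2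
        - 2 * t * (t - 1) * x ^ 2 * (x - 1) ^ 2 * (x - t)
          * ((t - 1) * (x - t) + t * (x - t) + t * (t - 1)) * v
        + x * (x - 1) * (x - t)
          * (κinf ^ 2 * x ^ 2 * (x - 1) ^ 2 * (x - t) ^ 2
              - κ₀ ^ 2 * t * (x - 1) ^ 2 * (x - t) ^ 2
              + κ₁ ^ 2 * (t - 1) * x ^ 2 * (x - t) ^ 2
              + (1 - θ ^ 2) * t * (t - 1) * x ^ 2 * (x - 1) ^ 2))
      / (2 * t ^ 2 * (t - 1) ^ 2 * x ^ 2 * (x - 1) ^ 2 * (x - t) ^ 2) := by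
  have h2 : (2 : ℂ) ≠ 0 := two_ne_zero
  have hb : (2 : ℂ) * (x * (x - 1) * (x - t)) * (t * (t - 1) * (x - t)) ≠ 0 :=
    mul_ne_zero (mul_ne_zero h2 (mul_ne_zero (mul_ne_zero hx hx1) hxt))
      (mul_ne_zero (mul_ne_zero ht0 ht1) hxt)
  have he : (2 : ℂ) * (2 * x ^ 2) * (2 * (x - 1) ^ 2) ≠ 0 :=
    mul_ne_zero (mul_ne_zero h2 (mul_ne_zero h2 (pow_ne_zero 2 hx)))
      (mul_ne_zero h2 (pow_ne_zero 2 hx1))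
  have hh : (2 : ℂ) * t ^ 2 * (t - 1) ^ 2 * x ^ 2 * (x - 1) ^ 2 * (x - t) ^ 2 ≠ 0 :=
    mul_ne_zero (mul_ne_zero (mul_ne_zero (mul_ne_zero (mul_ne_zero h2
      (pow_ne_zero 2 ht0)) (pow_ne_zero 2 ht1)) (pow_ne_zero 2 hx))
      (pow_ne_zero 2 hx1)) (pow_ne_zero 2 hxt)
  rw [PVIrhs]
  field_simp
  have hq : t ^ 2 * (t - 1) ^ 2 * (2 * (2 * x ^ 2) * (2 * (x - 1) ^ 2) * (2 * (x - t) ^ 2)) ≠ 0 :=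
    mul_ne_zero (mul_ne_zero (pow_ne_zero 2 ht0) (pow_ne_zero 2 ht1))
      (mul_ne_zero (mul_ne_zero (mul_ne_zero h2 (mul_ne_zero h2 (pow_ne_zero 2 hx)))
        (mul_ne_zero h2 (pow_ne_zero 2 hx1))) (mul_ne_zero h2 (pow_ne_zero 2 hxt)))
  ring

/-- solutions of the Okamoto PVI Hamiltonian system with
`κ = ((κ₀+κ₁+θ-1)² - κ∞²)/4` give solutions of Painlevé VI with parameters
α = κ∞²/2, β = -κ₀²/2, γ = κ₁²/2, δ = (1-θ²)/2. -/
theorem Okamoto_solves_PVI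
    (κ₀ κ₁ θ κinf κ : ℂ) (hκ : κ = ((κ₀ + κ₁ + θ - 1) ^ 2 - κinf ^ 2) / 4)
    (U : Set ℂ) (hU : IsOpen U) (q p : ℂ → ℂ)
    (hreg : ∀ t ∈ U, t * (t - 1) ≠ 0 ∧ q t ≠ 0 ∧ q t ≠ 1 ∧ q t ≠ t)
    (hq : ∀ t ∈ U, HasDerivAt q (OkRq κ₀ κ₁ θ κ t (q t) (p t)) t)
    (hp : ∀ t ∈ U, HasDerivAt p (OkRp κ₀ κ₁ θ κ t (q t) (p t)) t) :
    ∀ t ∈ U, HasDerivAt (deriv q)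
      (PVIrhs (κinf ^ 2 / 2) (-(κ₀ ^ 2) / 2) (κ₁ ^ 2 / 2) ((1 - θ ^ 2) / 2)
        t (q t) (deriv q t)) t := by
  intro t ht
  obtain ⟨htt, hq0, hq1, hqt⟩ := hreg t ht
  obtain ⟨ht0, ht1⟩ := mul_ne_zero_iff.mp htt
  have hq1' : q t - 1 ≠ 0 := sub_ne_zero.mpr hq1
  have hqt' : q t - t ≠ 0 := sub_ne_zero.mpr hqt
  have hq' := hq t ht
  have hp' := hp t ht
  have hAB : HasDerivAt (fun s => (q s - 1) * (q s - s))
      (OkRq κ₀ κ₁ θ κ t (q t) (p t) * (q t - t)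
        + (q t - 1) * (OkRq κ₀ κ₁ θ κ t (q t) (p t) - 1)) t :=
    (hq'.sub_const 1).mul (hq'.sub (hasDerivAt_id t))
  have hC : HasDerivAt (fun s => 2 * q s * p s - κ₀)
      (2 * OkRq κ₀ κ₁ θ κ t (q t) (p t) * p t
        + 2 * q t * OkRp κ₀ κ₁ θ κ t (q t) (p t)) t :=
    ((hq'.const_mul 2).mul hp').sub_const κ₀
  have hABC := hAB.mul hC
  have h2 : HasDerivAt (fun s => κ₁ * q s * (q s - s))
      (κ₁ * OkRq κ₀ κ₁ θ κ t (q t) (p t) * (q t - t)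
        + κ₁ * q t * (OkRq κ₀ κ₁ θ κ t (q t) (p t) - 1)) t :=
    (hq'.const_mul κ₁).mul (hq'.sub (hasDerivAt_id t))
  have h3 : HasDerivAt (fun s => (θ - 1) * q s * (q s - 1))
      ((θ - 1) * OkRq κ₀ κ₁ θ κ t (q t) (p t) * (q t - 1)
        + (θ - 1) * q t * OkRq κ₀ κ₁ θ κ t (q t) (p t)) t :=
    (hq'.const_mul (θ - 1)).mul (hq'.sub_const 1)
  have hN := (hABC.sub h2).sub h3
  have hDen : HasDerivAt (fun s : ℂ => s * (s - 1)) (1 * (t - 1) + t * 1) t :=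
    (hasDerivAt_id t).mul ((hasDerivAt_id t).sub_const 1)
  have hF := hN.div hDen htt
  have heq : deriv q =ᶠ[nhds t]
      (fun s => ((q s - 1) * (q s - s) * (2 * q s * p s - κ₀)
        - κ₁ * q s * (q s - s) - (θ - 1) * q s * (q s - 1)) / (s * (s - 1))) := by
    filter_upwards [hU.mem_nhds ht] with s hs
    rw [(hq s hs).deriv]
    simp only [OkRq]
    ring
  have hF' := hF.congr_of_eventuallyEq heq
  have hdq : deriv q t = OkRq κ₀ κ₁ θ κ t (q t) (p t) := (hq t ht).deriv
  rw [hdq]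
  refine hF'.congr_deriv (Eq.symm ?_)
  rw [PVIrhs_eq_aux κ₀ κ₁ θ κinf t (q t) _ ht0 ht1 hq0 hq1' hqt']
  subst hκ
  simp only [OkRq, OkRp]
  field_simp
  have hD2 : t * (t - 1) * (t * (t - 1) * (t * (t - 1) * 4)) * (t * (t - 1)) ≠ 0 := by
    have h4 : (4 : ℂ) ≠ 0 := by norm_num
    exact mul_ne_zero (mul_ne_zero htt (mul_ne_zero htt (mul_ne_zero htt h4))) htt
  have hD1 : (t * (t - 1)) ^ 2 * (t * (t - 1))
      * (2 * t ^ 2 * (t - 1) ^ 2 * q t ^ 2 * (q t - 1) ^ 2 * (q t - t) ^ 2) ≠ 0 := by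
    have h2 : (2 : ℂ) ≠ 0 := two_ne_zero
    exact mul_ne_zero (mul_ne_zero (pow_ne_zero 2 htt) htt)
      (mul_ne_zero (mul_ne_zero (mul_ne_zero (mul_ne_zero (mul_ne_zero h2
        (pow_ne_zero 2 ht0)) (pow_ne_zero 2 ht1)) (pow_ne_zero 2 hq0))
        (pow_ne_zero 2 hq1')) (pow_ne_zero 2 hqt'))
  simp only [Pi.sub_apply, Pi.mul_apply]
  ring
end

section
/- Fix a₀, a₁, a₂, a₃, a₄ ∈ ℂ with a₀ + a₁ + 2a₂ + a₃ + a₄ = 1, and set θ = a₀, κ₀ = a₄, κ₁ = a₃, κ = a₂(a₁+a₂). Let U ⊆ ℂ be open and let q, p : U → ℂ be differentiable functions satisfying the Okamoto PVI Hamiltonian system (with parameters κ₀, κ₁, θ, κ) on U, such that for all t ∈ U one has t(t−1) ≠ 0 and q(t) ≠ 0. Then the pair of functions f := q and g := q·p satisfies the Kajiwara–Noumi–Yamada PVI Hamiltonian system with root variables a₀, a₁, a₂, a₃, a₄ on U. -/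
/-- Right-hand side of the `f`-equation of the KNY PVI Hamiltonian system. -/
noncomputable def KNYRf (a₀ a₁ a₂ a₃ a₄ : ℂ) (t f g : ℂ) : ℂ :=
  (1 / (t * (t - 1)))
    * ((f - 1) * (f - t) * (2 * g - a₄) - (a₀ - 1) * f * (f - 1) - a₃ * f * (f - t))

/-- Right-hand side of the `g`-equation of the KNY PVI Hamiltonian system. -/
noncomputable def KNYRg (a₀ a₁ a₂ a₃ a₄ : ℂ) (t f g : ℂ) : ℂ :=
  -(1 / (t * (t - 1)))
    * (f * (g + a₂) * (g + a₁ + a₂) - (t * g / f) * (g - a₄))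

/-- the change of variables `(f,g) = (q, qp)` maps solutions of
the Okamoto PVI system (with θ = a₀, κ₀ = a₄, κ₁ = a₃, κ = a₂(a₁+a₂)) to
solutions of the KNY PVI Hamiltonian system. -/
theorem Okamoto_to_KNY_PVI
    (a₀ a₁ a₂ a₃ a₄ κ₀ κ₁ θ κ : ℂ)
    (hnorm : a₀ + a₁ + 2 * a₂ + a₃ + a₄ = 1)
    (hθ : θ = a₀) (hκ₀ : κ₀ = a₄) (hκ₁ : κ₁ = a₃) (hκ : κ = a₂ * (a₁ + a₂))
    (U : Set ℂ) (hU : IsOpen U) (q p : ℂ → ℂ)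
    (hreg : ∀ t ∈ U, t * (t - 1) ≠ 0 ∧ q t ≠ 0)
    (hq : ∀ t ∈ U, HasDerivAt q (OkRq κ₀ κ₁ θ κ t (q t) (p t)) t)
    (hp : ∀ t ∈ U, HasDerivAt p (OkRp κ₀ κ₁ θ κ t (q t) (p t)) t) :
    ∀ t ∈ U,
      HasDerivAt q (KNYRf a₀ a₁ a₂ a₃ a₄ t (q t) (q t * p t)) t ∧
      HasDerivAt (fun t' => q t' * p t')
        (KNYRg a₀ a₁ a₂ a₃ a₄ t (q t) (q t * p t)) t := by
  intro t ht
  obtain ⟨hreg1, hreg2⟩ := hreg t ht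
  have hq' := hq t ht
  have hp' := hp t ht
  have hRq : OkRq κ₀ κ₁ θ κ t (q t) (p t)
      = KNYRf a₀ a₁ a₂ a₃ a₄ t (q t) (q t * p t) := by
    simp only [OkRq, KNYRf, hθ, hκ₀, hκ₁]; ring
  have hRg : OkRq κ₀ κ₁ θ κ t (q t) (p t) * p t
      + q t * OkRp κ₀ κ₁ θ κ t (q t) (p t)
      = KNYRg a₀ a₁ a₂ a₃ a₄ t (q t) (q t * p t) := by
    have ha₀ : a₀ = 1 - a₁ - 2 * a₂ - a₃ - a₄ := by linear_combination hnorm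
    simp only [OkRq, OkRp, KNYRg, hθ, hκ₀, hκ₁, hκ, ha₀]
    field_simp
    ring
  refine ⟨hRq ▸ hq', ?_⟩
  have := hq'.mul hp'
  rwa [hRg] at this
end

section
/- Fix κ₀, θ∞ ∈ ℂ. Let U ⊆ ℂ be open and let f, g : U → ℂ be differentiable functions satisfying the Okamoto PIV Hamiltonian system on U, such that f(t) ≠ 0 for all t ∈ U. Then f is twice differentiable on U and satisfies the Painlevé IV equation with parameters α = 1 + 2θ∞ − κ₀ and β = −2κ₀². -/
/-- solutions of the Okamoto PIV Hamiltonian system give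
solutions of the Painlevé IV equation with parameters
α = 1 + 2θ∞ - κ₀ and β = -2κ₀². -/
theorem Okamoto_solves_PIV
    (κ₀ θinf : ℂ) (U : Set ℂ) (hU : IsOpen U) (f g : ℂ → ℂ)
    (hreg : ∀ t ∈ U, f t ≠ 0)
    (hf : ∀ t ∈ U, HasDerivAt f
      (4 * f t * g t - (f t) ^ 2 - 2 * t * f t - 2 * κ₀) t)
    (hg : ∀ t ∈ U, HasDerivAt g
      (-2 * (g t) ^ 2 + (2 * f t + 2 * t) * g t - θinf) t) :
    ∀ t ∈ U, HasDerivAt (deriv f)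
      ((1 / (2 * f t)) * (deriv f t) ^ 2 + (3 / 2) * (f t) ^ 3
        + 4 * t * (f t) ^ 2 + 2 * (t ^ 2 - (1 + 2 * θinf - κ₀)) * f t
        + (-2 * κ₀ ^ 2) / f t) t := by
  intro t ht
  have hft := hreg t ht
  have hf' := hf t ht
  have hg' := hg t ht
  set A := 4 * f t * g t - (f t) ^ 2 - 2 * t * f t - 2 * κ₀ with hA
  set B := -2 * (g t) ^ 2 + (2 * f t + 2 * t) * g t - θinf with hB
  have heq : deriv f =ᶠ[nhds t]
      fun s => 4 * f s * g s - (f s) ^ 2 - 2 * s * f s - 2 * κ₀ := by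
    filter_upwards [hU.mem_nhds ht] with s hs
    exact (hf s hs).deriv
  have hF := ((((hf'.const_mul 4).mul hg').sub (hf'.pow 2)).sub
      (((hasDerivAt_id t).const_mul 2).mul hf')).sub (hasDerivAt_const t (2 * κ₀))
  simp only [id, Nat.cast_ofNat, pow_one] at hF
  have hderiv : deriv f t = A := hf'.deriv
  have := hF.congr_of_eventuallyEq heq
  refine this.congr_deriv ?_
  rw [hderiv, hA, hB]
  field_simp
  ring
end

section
/- Let L be the free ℤ-module with basis (H_q, H_p, E₁, …, E₉) equipped with the symmetric bilinear form determined by H_q·H_p = 1, H_q·H_q = H_p·H_p = 0, E_i·E_j = −1 if i = j and 0 if i ≠ j, and H_q·E_i = H_p·E_i = 0; let L′ be the free ℤ-module with basis (H_x, H_y, F₁, …, F₉) with the analogously defined form. Then the ℤ-linear map Φ : L′ → L defined by Φ(H_x) = 2H_q + H_p − E₁ − E₂ − E₃ − E₉, Φ(H_y) = H_q, Φ(F₁) = H_q − E₉, Φ(F₂) = H_q − E₃, Φ(F₃) = E₄, Φ(F₄) = H_q − E₂, Φ(F₅) = H_q − E₁, Φ(F₆) = E₅, Φ(F₇) = E₆,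 Φ(F₈) = E₇, Φ(F₉) = E₈ preserves the bilinear forms (it is an isometry), and it is bijective with inverse Ψ : L → L′ given by Ψ(H_q) = H_y, Ψ(H_p) = H_x + 2H_y − F₁ − F₂ − F₄ − F₅, Ψ(E₁) = H_y − F₅, Ψ(E₂) = H_y − F₄, Ψ(E₃) = H_y − F₂, Ψ(E₄) = F₃, Ψ(E₅) = F₆, Ψ(E₆) = F₇, Ψ(E₇) = F₈, Ψ(E₈) = F₉, Ψ(E₉) = H_y − F₁. -/
open Matrix

open Fin.NatCast in
/-- The intersection form on the Picard lattice of a rational surface obtained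
from `ℙ¹×ℙ¹` by nine blowups, in the basis `(H₁, H₂, E₁, …, E₉)` (indices
`0, 1, 2, …, 10`): `H₁·H₂ = 1`, `H₁² = H₂² = 0`, `Eᵢ·Eⱼ = -δᵢⱼ`,
`Hₖ·Eᵢ = 0`. -/
def picForm (v w : Fin 11 → ℤ) : ℤ :=
  v 0 * w 1 + v 1 * w 0 - ∑ i : Fin 9, v i.succ.succ.castSucc.castSucc * w i.succ.succ.castSucc.castSucc

/-- The matrix of the map `Φ : L' → L` of Lemma 3.1: column `j` lists the
coordinates of the image of the `j`-th basis vector of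
`L' = Span(H_x, H_y, F₁, …, F₉)` in the basis `(H_q, H_p, E₁, …, E₉)` of `L`.
Explicitly: `Φ(H_x) = 2H_q + H_p - E₁ - E₂ - E₃ - E₉`, `Φ(H_y) = H_q`,
`Φ(F₁) = H_q - E₉`, `Φ(F₂) = H_q - E₃`, `Φ(F₃) = E₄`, `Φ(F₄) = H_q - E₂`,
`Φ(F₅) = H_q - E₁`, `Φ(F₆) = E₅`, `Φ(F₇) = E₆`, `Φ(F₈) = E₇`, `Φ(F₉) = E₈`. -/
def PhiMat : Matrix (Fin 11) (Fin 11) ℤ :=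
  !![ 2, 1, 1, 1, 0, 1, 1, 0, 0, 0, 0;
      1, 0, 0, 0, 0, 0, 0, 0, 0, 0, 0;
     -1, 0, 0, 0, 0, 0,-1, 0, 0, 0, 0;
     -1, 0, 0, 0, 0,-1, 0, 0, 0, 0, 0;
     -1, 0, 0,-1, 0, 0, 0, 0, 0, 0, 0;
      0, 0, 0, 0, 1, 0, 0, 0, 0, 0, 0;
      0, 0, 0, 0, 0, 0, 0, 1, 0, 0, 0;
      0, 0, 0, 0, 0, 0, 0, 0, 1, 0, 0;
      0, 0, 0, 0, 0, 0, 0, 0, 0, 1, 0;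
      0, 0, 0, 0, 0, 0, 0, 0, 0, 0, 1;
     -1, 0,-1, 0, 0, 0, 0, 0, 0, 0, 0]

/-- The matrix of the map `Ψ : L → L'` of Lemma 3.1: column `j` lists the
coordinates of the image of the `j`-th basis vector of
`L = Span(H_q, H_p, E₁, …, E₉)` in the basis `(H_x, H_y, F₁, …, F₉)` of `L'`.
Explicitly: `Ψ(H_q) = H_y`, `Ψ(H_p) = H_x + 2H_y - F₁ - F₂ - F₄ - F₅`,
`Ψ(E₁) = H_y - F₅`, `Ψ(E₂) = H_y - F₄`, `Ψ(E₃) = H_y - F₂`, `Ψ(E₄) = F₃`,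
`Ψ(E₅) = F₆`, `Ψ(E₆) = F₇`, `Ψ(E₇) = F₈`, `Ψ(E₈) = F₉`, `Ψ(E₉) = H_y - F₁`. -/
def PsiMat : Matrix (Fin 11) (Fin 11) ℤ :=
  !![ 0, 1, 0, 0, 0, 0, 0, 0, 0, 0, 0;
      1, 2, 1, 1, 1, 0, 0, 0, 0, 0, 1;
      0,-1, 0, 0, 0, 0, 0, 0, 0, 0,-1;
      0,-1, 0, 0,-1, 0, 0, 0, 0, 0, 0;
      0, 0, 0, 0, 0, 1, 0, 0, 0, 0, 0;
      0,-1, 0,-1, 0, 0, 0, 0, 0, 0, 0;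
      0,-1,-1, 0, 0, 0, 0, 0, 0, 0, 0;
      0, 0, 0, 0, 0, 0, 1, 0, 0, 0, 0;
      0, 0, 0, 0, 0, 0, 0, 1, 0, 0, 0;
      0, 0, 0, 0, 0, 0, 0, 0, 1, 0, 0;
      0, 0, 0, 0, 0, 0, 0, 0, 0, 1, 0]

def GMat : Matrix (Fin 11) (Fin 11) ℤ :=
  !![ 0, 1, 0, 0, 0, 0, 0, 0, 0, 0, 0;
      1, 0, 0, 0, 0, 0, 0, 0, 0, 0, 0;
      0, 0,-1, 0, 0, 0, 0, 0, 0, 0, 0;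
      0, 0, 0,-1, 0, 0, 0, 0, 0, 0, 0;
      0, 0, 0, 0,-1, 0, 0, 0, 0, 0, 0;
      0, 0, 0, 0, 0,-1, 0, 0, 0, 0, 0;
      0, 0, 0, 0, 0, 0,-1, 0, 0, 0, 0;
      0, 0, 0, 0, 0, 0, 0,-1, 0, 0, 0;
      0, 0, 0, 0, 0, 0, 0, 0,-1, 0, 0;
      0, 0, 0, 0, 0, 0, 0, 0, 0,-1, 0;
      0, 0, 0, 0, 0, 0, 0, 0, 0, 0,-1]

lemma picForm_eq (v w : Fin 11 → ℤ) : picForm v w = v ⬝ᵥ GMat.mulVec w := by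
  simp [picForm, dotProduct, mulVec, GMat, Fin.sum_univ_succ, Fin.isValue,
    Matrix.cons_val_zero, Matrix.cons_val_one, Fin.succ]
  ring

lemma phi_psi : PhiMat * PsiMat = 1 := by
  decide

lemma psi_phi : PsiMat * PhiMat = 1 := by
  decide

lemma phiT_G_phi : PhiMat.transpose * GMat * PhiMat = GMat := by
  decide

/-- Lemma 3.1: the ℤ-linear map `Φ : L' → L` given by the basis
images above is an isometry of the Picard lattices, and it is bijective with
inverse the ℤ-linear map `Ψ : L → L'` given by the basis images above. -/
theorem vdPT_E61_Picard_change_of_basis :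
    (∀ v w : Fin 11 → ℤ,
        picForm (PhiMat.mulVec v) (PhiMat.mulVec w) = picForm v w) ∧
    Function.Bijective (PhiMat.mulVec) ∧
    (∀ v : Fin 11 → ℤ, PhiMat.mulVec (PsiMat.mulVec v) = v) ∧
    (∀ v : Fin 11 → ℤ, PsiMat.mulVec (PhiMat.mulVec v) = v) := by
  have hpp : ∀ v : Fin 11 → ℤ, PhiMat.mulVec (PsiMat.mulVec v) = v := by
    intro v
    rw [Matrix.mulVec_mulVec, phi_psi, Matrix.one_mulVec]
  have hpp' : ∀ v : Fin 11 → ℤ, PsiMat.mulVec (PhiMat.mulVec v) = v := by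
    intro v
    rw [Matrix.mulVec_mulVec, psi_phi, Matrix.one_mulVec]
  refine ⟨?_, ⟨Function.LeftInverse.injective hpp', Function.RightInverse.surjective hpp⟩, hpp, hpp'⟩
  intro v w
  rw [picForm_eq, picForm_eq, Matrix.mulVec_mulVec, Matrix.dotProduct_mulVec,
    Matrix.vecMul_mulVec, ← Matrix.mul_assoc, phiT_G_phi, ← Matrix.dotProduct_mulVec]
end
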